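/- Let κ ∈ C² be nonzero, J the matrix with rows (0,i) and (−i,0), and Zκ = J·conj(κ). Then the Hermitian matrices κκ* and κκᵀJ + J·conj(κ)·κ* are linearly independent over R. -/
import Mathlib


open Matrix

/-- The matrix `J`. -/
noncomputable def Jmat : Matrix (Fin 2) (Fin 2) ℂ := !![0, Complex.I; -Complex.I, 0]

theorem flag_vectors_linearIndependent (κ : Fin 2 → ℂ) (hκ : κ ≠ 0) :
    LinearIndependent ℝ
      ![vecMulVec κ (star κ),
        vecMulVec κ κ * Jmat + Jmat * vecMulVec (star κ) (star κ)] := by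
  rw [LinearIndependent.pair_iff]
  intro a b h
  set p := κ 0 with hp
  set q := κ 1 with hq
  have hk : Complex.normSq p + Complex.normSq q ≠ 0 := by
    intro h0
    have hp0 : Complex.normSq p = 0 ∧ Complex.normSq q = 0 := by
      constructor <;> nlinarith [Complex.normSq_nonneg p, Complex.normSq_nonneg q]
    apply hκ
    funext i
    fin_cases i
    · simpa [← hp] using Complex.normSq_eq_zero.mp hp0.1
    · simpa [← hq] using Complex.normSq_eq_zero.mp hp0.2
  have h00 := congrFun (congrFun h 0) 0
  have h01 := congrFun (congrFun h 0) 1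
  have h11 := congrFun (congrFun h 1) 1
  simp [Jmat, Matrix.mul_apply, Fin.sum_univ_two, vecMulVec_apply, Matrix.vecMul, dotProduct,
    Pi.star_apply, Complex.real_smul] at h00 h01 h11
  -- eliminate a
  have ha : (a : ℂ) * ((Complex.normSq p : ℂ) + (Complex.normSq q : ℂ)) = 0 := by
    rw [Complex.normSq_eq_conj_mul_self, Complex.normSq_eq_conj_mul_self]
    linear_combination h00 + h11
  have ha0 : a = 0 := by
    rcases mul_eq_zero.mp ha with h' | h'
    · exact_mod_cast h'
    · exfalso; apply hk; exact_mod_cast h'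
  subst ha0
  refine ⟨rfl, ?_⟩
  by_contra hb
  have hbC : (b : ℂ) ≠ 0 := by exact_mod_cast hb
  simp only [Complex.ofReal_zero, zero_mul, zero_add, neg_add_eq_zero, neg_mul] at h00 h01
  have hX : (b : ℂ) * (-(p * q * Complex.I) + Complex.I * ((starRingEnd ℂ) q * (starRingEnd ℂ) p)) = 0 := by
    linear_combination -h00
  have hY : (b : ℂ) * (p * p * Complex.I + Complex.I * ((starRingEnd ℂ) q * (starRingEnd ℂ) q)) = 0 := by
    linear_combination h01
  have hX0 := (mul_eq_zero.mp hX).resolve_left hbC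
  have hY0 := (mul_eq_zero.mp hY).resolve_left hbC
  have hb1 : p * q = (starRingEnd ℂ) (p * q) := by
    rw [RingHom.map_mul]
    linear_combination Complex.I * hX0 +
      (p * q - (starRingEnd ℂ) q * (starRingEnd ℂ) p) * Complex.I_sq
  have hb2 : p * p = -((starRingEnd ℂ) q * (starRingEnd ℂ) q) := by
    linear_combination -Complex.I * hY0 +
      (p * p + (starRingEnd ℂ) q * (starRingEnd ℂ) q) * Complex.I_sq
  have hkey : ((p * q).re : ℂ) ^ 2 = -((Complex.normSq q : ℂ)) ^ 2 := by
    have hre : ((p * q).re : ℂ) = p * q := Complex.conj_eq_iff_re.mp hb1.symm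
    rw [hre, Complex.normSq_eq_conj_mul_self]
    calc (p*q)^2 = (p*p) * (q*q) := by ring
      _ = -(((starRingEnd ℂ) q * q)^2) := by rw [hb2]; ring
  have hkeyR : ((p * q).re) ^ 2 = -(Complex.normSq q) ^ 2 := by exact_mod_cast hkey
  have hq0 : q = 0 := by
    have : Complex.normSq q = 0 := by nlinarith [sq_nonneg (p*q).re, Complex.normSq_nonneg q]
    exact Complex.normSq_eq_zero.mp this
  have hp0 : p = 0 := by
    have : p * p = 0 := by rw [hb2, hq0]; simp
    exact (mul_self_eq_zero).mp this
  apply hκ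
  funext i
  fin_cases i
  · exact hp0
  · exact hq0
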